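/- Fix K ≥ 1, λ > 0, and N ≥ K+1. Let G* be a directed graph on N nodes with out-degree exactly K minimizing L(G) = Σ_i Σ_{x ∈ C_i} R_i(x) + λ Σ_i |G_i|² (ranks as above). Then λ·(max_i |G_i|)² ≤ NK(N−1) + 4λNK², hence max_i |G_i| ≤ sqrt(NK(N−1)/λ + 4NK²). -/

import Mathlib

open Finset
open Fin.NatCast

/-- The total degree (out-degree plus in-degree) of node `i` in the directed graph whose
out-neighborhoods are `C`. -/
def totalDeg {N : ℕ} (C : Fin N → Finset (Fin N)) (i : Fin N) : ℕ :=
  (C i).card + (Finset.univ.filter (fun j => i ∈ C j)).card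

/-- The K-RNNG objective: the sum of the ranks of each node's out-neighbors plus
`λ` times the sum of squared total degrees. -/
def objective {N : ℕ} (R : Fin N → Fin N → ℕ) (lam : ℝ) (C : Fin N → Finset (Fin N)) : ℝ :=
  (∑ i : Fin N, ∑ j ∈ C i, (R i j : ℝ)) + lam * ∑ i : Fin N, (totalDeg C i : ℝ) ^ 2

/-- For any minimizer `G*` of the K-RNNG objective over out-degree-`K` directed graphs,
`λ (max_i |G_i|)² ≤ N K (N−1) + 4 λ N K²`, hence
`max_i |G_i| ≤ sqrt(N K (N−1)/λ + 4 N K²)`. -/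
theorem max_degree_sq_bound_of_minimizer (N K : ℕ) (hK : 1 ≤ K) (hN : K + 1 ≤ N)
    (lam : ℝ) (hlam : 0 < lam)
    (R : Fin N → Fin N → ℕ)
    (hR_mem : ∀ i j : Fin N, j ≠ i → 1 ≤ R i j ∧ R i j ≤ N - 1)
    (hR_inj : ∀ i j j' : Fin N, j ≠ i → j' ≠ i → R i j = R i j' → j = j')
    (Cstar : Fin N → Finset (Fin N))
    (hC_irr : ∀ i, i ∉ Cstar i) (hC_card : ∀ i, (Cstar i).card = K)
    (hmin : ∀ C : Fin N → Finset (Fin N), (∀ i, i ∉ C i) → (∀ i, (C i).card = K) →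
      objective R lam Cstar ≤ objective R lam C) :
    lam * (((Finset.univ.sup (totalDeg Cstar) : ℕ) : ℝ)) ^ 2
        ≤ N * K * (N - 1) + 4 * lam * N * K ^ 2
    ∧ (((Finset.univ.sup (totalDeg Cstar) : ℕ) : ℝ))
        ≤ Real.sqrt ((N * K * (N - 1)) / lam + 4 * N * K ^ 2) := by

  haveI : NeZero N := ⟨by omega⟩
  set C : Fin N → Finset (Fin N) :=
    fun i => (Finset.range K).image (fun t => i + ((t+1 : ℕ) : Fin N)) with hCdef
  have hval : ∀ t, t < K → ((t+1 : ℕ) : Fin N).val = t+1 := by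
    intro t ht; exact Fin.val_cast_of_lt (by omega)
  have hcinj : ∀ s t, s < K → t < K → ((s+1:ℕ):Fin N) = ((t+1:ℕ):Fin N) → s = t := by
    intro s t hs ht h
    have := congrArg Fin.val h
    rw [hval s hs, hval t ht] at this; omega
  have hcard : ∀ i, (C i).card = K := by
    intro i
    rw [hCdef]
    rw [Finset.card_image_of_injOn, Finset.card_range]
    intro s hs t ht h
    simp only [Finset.coe_range, Set.mem_Iio] at hs ht
    exact hcinj s t hs ht (by exact add_left_cancel h)
  have hcne : ∀ t, t < K → ((t+1:ℕ):Fin N) ≠ 0 := by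
    intro t ht h
    have := congrArg Fin.val h
    rw [hval t ht] at this; simp at this
  have hirr : ∀ i, i ∉ C i := by
    intro i hi
    rw [hCdef] at hi
    simp only [Finset.mem_image, Finset.mem_range] at hi
    obtain ⟨t, ht, heq⟩ := hi
    exact hcne t ht (by rwa [add_eq_left] at heq)
  have hdeg : ∀ i, totalDeg C i = 2 * K := by
    intro i
    have hfilt : (Finset.univ.filter (fun j => i ∈ C j))
        = (Finset.range K).image (fun t => i - ((t+1:ℕ):Fin N)) := by
      ext j
      simp only [Finset.mem_filter, Finset.mem_univ, true_and, hCdef,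
        Finset.mem_image, Finset.mem_range]
      constructor
      · rintro ⟨t, ht, heq⟩
        exact ⟨t, ht, (eq_sub_of_add_eq heq).symm⟩
      · rintro ⟨t, ht, heq⟩
        exact ⟨t, ht, by rw [← heq, sub_add_cancel]⟩
    rw [totalDeg, hcard, hfilt, Finset.card_image_of_injOn, Finset.card_range]
    · omega
    · intro s hs t ht h
      simp only [Finset.coe_range, Set.mem_Iio] at hs ht
      exact hcinj s t hs ht (sub_right_injective h)
  -- upper bound on objective of circulant graph
  have hN1 : ((N - 1 : ℕ) : ℝ) = (N : ℝ) - 1 := by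
    rw [Nat.cast_sub (by omega), Nat.cast_one]
  have hub : objective R lam C ≤ N * K * (N - 1) + 4 * lam * N * K ^ 2 := by
    have h1 : (∑ i : Fin N, ∑ j ∈ C i, (R i j : ℝ)) ≤ N * K * (N - 1) := by
      have hle : ∀ i : Fin N, (∑ j ∈ C i, (R i j : ℝ)) ≤ K * ((N:ℝ) - 1) := by
        intro i
        calc (∑ j ∈ C i, (R i j : ℝ)) ≤ ∑ _j ∈ C i, ((N:ℝ) - 1) := by
              apply Finset.sum_le_sum
              intro j hj
              have hji : j ≠ i := fun h => hirr i (h ▸ hj)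
              have := (hR_mem i j hji).2
              calc ((R i j : ℕ) : ℝ) ≤ ((N - 1 : ℕ) : ℝ) := by exact_mod_cast this
                _ = (N : ℝ) - 1 := hN1
          _ = K * ((N:ℝ) - 1) := by
              rw [Finset.sum_const, hcard i, nsmul_eq_mul]
      calc (∑ i : Fin N, ∑ j ∈ C i, (R i j : ℝ)) ≤ ∑ _i : Fin N, (K : ℝ) * ((N:ℝ) - 1) :=
            Finset.sum_le_sum (fun i _ => hle i)
        _ = N * K * (N - 1) := by
            rw [Finset.sum_const, Finset.card_univ, Fintype.card_fin, nsmul_eq_mul]; ring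
    have h2 : lam * ∑ i : Fin N, (totalDeg C i : ℝ) ^ 2 = 4 * lam * N * K ^ 2 := by
      have : ∀ i : Fin N, (totalDeg C i : ℝ) ^ 2 = 4 * K ^ 2 := by
        intro i; rw [hdeg i]; push_cast; ring
      rw [Finset.sum_congr rfl (fun i _ => this i), Finset.sum_const,
        Finset.card_univ, Fintype.card_fin, nsmul_eq_mul]
      ring
    rw [objective, h2]
    linarith
  -- lower bound on objective of Cstar
  set M : ℕ := Finset.univ.sup (totalDeg Cstar) with hM
  have hlb : lam * (M : ℝ) ^ 2 ≤ objective R lam Cstar := by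
    have hne : (Finset.univ : Finset (Fin N)).Nonempty := Finset.univ_nonempty
    obtain ⟨i0, _, hi0⟩ := Finset.exists_mem_eq_sup Finset.univ hne (totalDeg Cstar)
    have hsum : (M : ℝ) ^ 2 ≤ ∑ i : Fin N, (totalDeg Cstar i : ℝ) ^ 2 := by
      have := Finset.single_le_sum (f := fun i => (totalDeg Cstar i : ℝ) ^ 2)
        (fun i _ => sq_nonneg _) (Finset.mem_univ i0)
      rw [hM, hi0]; exact this
    have hrank : (0:ℝ) ≤ ∑ i : Fin N, ∑ j ∈ Cstar i, (R i j : ℝ) := by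
      apply Finset.sum_nonneg; intro i _
      apply Finset.sum_nonneg; intro j _; positivity
    have := mul_le_mul_of_nonneg_left hsum hlam.le
    rw [objective]; linarith
  have hmain : lam * (M : ℝ) ^ 2 ≤ N * K * (N - 1) + 4 * lam * N * K ^ 2 :=
    le_trans hlb (le_trans (hmin C hirr hcard) hub)
  refine ⟨hmain, ?_⟩
  have hNR : (0:ℝ) ≤ (N:ℝ) - 1 := by
    have : (1:ℝ) ≤ (N:ℝ) := by exact_mod_cast (by omega : 1 ≤ N)
    linarith
  have hrhs : (0:ℝ) ≤ (N * K * ((N:ℝ) - 1)) / lam + 4 * N * K ^ 2 :=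
    add_nonneg (div_nonneg (mul_nonneg (by positivity) hNR) hlam.le) (by positivity)
  rw [Real.le_sqrt (by positivity)]
  have h1 : (M:ℝ)^2 ≤ (N * K * (N - 1) + 4 * lam * N * K ^ 2) / lam :=
    (le_div_iff₀ hlam).mpr (by linarith)
  have h2 : (N * K * (N - 1) + 4 * lam * N * K ^ 2) / lam
      = N * K * (N - 1) / lam + 4 * N * K ^ 2 := by
    field_simp
  · linarith
  · exact hrhs
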